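/- Fix integers m ≥ 1, n ≥ 1 and t = (t_1,…,t_{2m}) ∈ ℝ^{2m−1}×(0,∞). Then the function λ ↦ ln Z_n(λ;t) is differentiable on ℝ and, for every λ ∈ ℝ, d/dλ ln Z_n(λ;t) = 4n · 𝔭_1(n;λ,t), where 𝔭_1(n;λ,t) is the coefficient of x^{n−1} in the monic orthogonal polynomial π_n(·;λ,t). -/

import Mathlib

open MeasureTheory Filter Set

noncomputable section

/-- The potential `V(x;λ,t) = 2x² + Σ_{k=1}^{2m} t_k (x−λ)^{−k}`. -/
def Vpot (m : ℕ) (lam : ℝ) (t : ℕ → ℝ) (x : ℝ) : ℝ :=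
  2 * x ^ 2 + ∑ k ∈ Finset.Icc 1 (2 * m), t k * (x - lam) ^ (-(k : ℤ))

/-- The weight `w_n(x;λ,t) = e^{−n V(x;λ,t)}`, extended by `0` at `x = λ`. -/
def wfun (m n : ℕ) (lam : ℝ) (t : ℕ → ℝ) (x : ℝ) : ℝ :=
  if x = lam then 0 else Real.exp (-(n : ℝ) * Vpot m lam t x)

/-- The partition function `Z_n(λ;t)`. -/
def Zn (m n : ℕ) (lam : ℝ) (t : ℕ → ℝ) : ℝ :=
  ∫ x : Fin n → ℝ,
    (∏ i : Fin n, ∏ j : Fin n, if i < j then (x j - x i) ^ 2 else 1) *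
      ∏ j : Fin n, wfun m n lam t (x j)

/-- For each `λ`, `P λ j` is the monic orthogonal polynomial of degree `j` with respect to the
weight `w_n(·;λ,t)`, with `∫ π_j π_k w_n = γ_j(λ;t)^{−2} δ_{jk}` and `γ_j(λ;t) > 0`. -/
def orthoFam (m n : ℕ) (t : ℕ → ℝ) (P : ℝ → ℕ → Polynomial ℝ) (γ : ℝ → ℕ → ℝ) : Prop :=
  (∀ lam j, (P lam j).Monic) ∧ (∀ lam j, (P lam j).natDegree = j) ∧
  (∀ lam j, 0 < γ lam j) ∧
  (∀ lam j k, (∫ x : ℝ, (P lam j).eval x * (P lam k).eval x * wfun m n lam t x)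
      = if j = k then (γ lam j) ^ (-(2 : ℤ)) else 0)




/-- the pole part of the weight, centered at 0 -/
def wz (m n : ℕ) (t : ℕ → ℝ) (y : ℝ) : ℝ :=
  if y = 0 then 0 else Real.exp (-(n : ℝ) * ∑ k ∈ Finset.Icc 1 (2 * m), t k * y ^ (-(k : ℤ)))

lemma wz_nonneg (m n : ℕ) (t : ℕ → ℝ) (y : ℝ) : 0 ≤ wz m n t y := by
  unfold wz; split
  · exact le_rfl
  · exact (Real.exp_pos _).le

lemma wfun_nonneg (m n : ℕ) (lam : ℝ) (t : ℕ → ℝ) (x : ℝ) : 0 ≤ wfun m n lam t x := by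
  unfold wfun; split
  · exact le_rfl
  · exact (Real.exp_pos _).le

lemma wfun_eq_wz (m n : ℕ) (lam : ℝ) (t : ℕ → ℝ) (x : ℝ) :
    wfun m n lam t x = Real.exp (-(n : ℝ) * (2 * x ^ 2)) * wz m n t (x - lam) := by
  unfold wfun wz Vpot
  by_cases h : x = lam
  · simp [h]
  · rw [if_neg h, if_neg (sub_ne_zero.mpr h), ← Real.exp_add]
    congr 1; ring

lemma wz_meas (m n : ℕ) (t : ℕ → ℝ) : Measurable (wz m n t) := by
  unfold wz
  refine Measurable.ite (by exact measurableSet_eq) measurable_const ?_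
  have : Measurable fun y : ℝ => ∑ k ∈ Finset.Icc 1 (2 * m), t k * y ^ (-(k : ℤ)) := by
    apply Finset.measurable_sum
    intro k _
    have : Measurable fun y : ℝ => y ^ (-(k : ℤ)) := by
      simp only [zpow_neg, zpow_natCast]
      exact (measurable_id.pow_const k).inv
    exact this.const_mul (t k)
  exact (this.const_mul _).exp

lemma wfun_meas (m n : ℕ) (lam : ℝ) (t : ℕ → ℝ) : Measurable (wfun m n lam t) := by
  have : Measurable fun x : ℝ => Real.exp (-(n : ℝ) * (2 * x ^ 2)) := by
    exact (((measurable_id.pow_const 2).const_mul 2).const_mul _).exp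
  have h2 : Measurable fun x : ℝ => wz m n t (x - lam) :=
    (wz_meas m n t).comp (measurable_id.sub_const lam)
  have h3 := this.mul h2
  have : wfun m n lam t = fun x => Real.exp (-(n : ℝ) * (2 * x ^ 2)) * wz m n t (x - lam) :=
    funext fun x => wfun_eq_wz m n lam t x
  rw [this]; exact h3


/-- global bound constant for the pole part -/
def polB (m : ℕ) (t : ℕ → ℝ) : ℝ :=
  (∑ k ∈ Finset.Icc 1 (2 * m), |t k|) *
    (max 1 ((∑ k ∈ Finset.Icc 1 (2 * m), |t k|) / t (2 * m))) ^ (2 * m - 1)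

lemma polB_nonneg (m : ℕ) (t : ℕ → ℝ) : 0 ≤ polB m t := by
  unfold polB
  apply mul_nonneg
  · exact Finset.sum_nonneg fun k _ => abs_nonneg _
  · positivity

lemma pole_sum_lb (m : ℕ) (hm : 1 ≤ m) (t : ℕ → ℝ) (ht : 0 < t (2 * m)) (u : ℝ) (hu : u ≠ 0) :
    -(polB m t) ≤ ∑ k ∈ Finset.Icc 1 (2 * m), t k * u ^ (-(k : ℤ)) := by
  set T := ∑ k ∈ Finset.Icc 1 (2 * m), |t k| with hT
  have hT0 : 0 ≤ T := Finset.sum_nonneg fun k _ => abs_nonneg _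
  set M := max 1 (T / t (2 * m)) with hM
  have hM1 : (1:ℝ) ≤ M := le_max_left _ _
  set v := |u|⁻¹ with hv
  have hv0 : 0 < v := inv_pos.mpr (abs_pos.mpr hu)
  have habs : ∀ k : ℕ, |u ^ (-(k : ℤ))| = v ^ k := by
    intro k
    rw [zpow_neg, zpow_natCast, abs_inv, abs_pow, hv, inv_pow]
  have h2m : 2 * m - 1 + 1 = 2 * m := by omega
  -- split off top term
  have hsplit : ∑ k ∈ Finset.Icc 1 (2 * m), t k * u ^ (-(k : ℤ))
      = (∑ k ∈ Finset.Icc 1 (2 * m - 1), t k * u ^ (-(k : ℤ)))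
        + t (2 * m) * u ^ (-((2 * m : ℕ) : ℤ)) := by
    rw [← h2m]
    exact Finset.sum_Icc_succ_top (by omega) _
  -- top term is nonneg and equals t2m * v^(2m)
  have htop : t (2 * m) * u ^ (-((2 * m : ℕ) : ℤ)) = t (2 * m) * v ^ (2 * m) := by
    congr 1
    have hnn : 0 ≤ u ^ (-((2 * m : ℕ) : ℤ)) := by
      rw [zpow_neg, zpow_natCast]
      have : u ^ (2 * m) = (u ^ m) ^ 2 := by rw [← pow_mul, mul_comm]
      rw [this]; positivity
    rw [← abs_of_nonneg hnn, habs]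
  -- lower bound for the rest
  have hrest : ∀ k ∈ Finset.Icc 1 (2 * m - 1), -(|t k| * v ^ k) ≤ t k * u ^ (-(k : ℤ)) := by
    intro k _
    have := neg_abs_le (t k * u ^ (-(k : ℤ)))
    rwa [abs_mul, habs] at this
  have hsum_rest : -(∑ k ∈ Finset.Icc 1 (2 * m - 1), |t k| * v ^ k)
      ≤ ∑ k ∈ Finset.Icc 1 (2 * m - 1), t k * u ^ (-(k : ℤ)) := by
    rw [← Finset.sum_neg_distrib]
    exact Finset.sum_le_sum hrest
  by_cases hcase : v ≤ M
  · -- small v case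
    have hbd : ∑ k ∈ Finset.Icc 1 (2 * m - 1), |t k| * v ^ k ≤ polB m t := by
      have h1 : ∀ k ∈ Finset.Icc 1 (2 * m - 1), |t k| * v ^ k ≤ |t k| * M ^ (2 * m - 1) := by
        intro k hk
        have hk2 : k ≤ 2 * m - 1 := (Finset.mem_Icc.mp hk).2
        have : v ^ k ≤ M ^ k := pow_le_pow_left₀ hv0.le hcase k
        have h2 : M ^ k ≤ M ^ (2 * m - 1) := pow_le_pow_right₀ hM1 hk2
        exact mul_le_mul_of_nonneg_left (this.trans h2) (abs_nonneg _)
      calc ∑ k ∈ Finset.Icc 1 (2 * m - 1), |t k| * v ^ k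
          ≤ ∑ k ∈ Finset.Icc 1 (2 * m - 1), |t k| * M ^ (2 * m - 1) :=
            Finset.sum_le_sum h1
        _ = (∑ k ∈ Finset.Icc 1 (2 * m - 1), |t k|) * M ^ (2 * m - 1) := by
            rw [Finset.sum_mul]
        _ ≤ T * M ^ (2 * m - 1) := by
            apply mul_le_mul_of_nonneg_right _ (by positivity)
            apply Finset.sum_le_sum_of_subset_of_nonneg
            · apply Finset.Icc_subset_Icc_right; omega
            · intro k _ _; exact abs_nonneg _
        _ = polB m t := rfl
    have htopnn : 0 ≤ t (2 * m) * v ^ (2 * m) := by positivity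
    rw [hsplit, htop]
    have := neg_le_neg hbd
    linarith [hsum_rest]
  · -- large v case : the sum is nonnegative
    push_neg at hcase
    have hv1 : (1:ℝ) ≤ v := hM1.trans hcase.le
    have hTv : T < t (2 * m) * v := by
      have : T / t (2 * m) ≤ M := le_max_right _ _
      have h2 : T / t (2 * m) < v := lt_of_le_of_lt this hcase
      rw [div_lt_iff₀ ht] at h2
      linarith [h2]
    have hbd : ∑ k ∈ Finset.Icc 1 (2 * m - 1), |t k| * v ^ k ≤ T * v ^ (2 * m - 1) := by
      have h1 : ∀ k ∈ Finset.Icc 1 (2 * m - 1), |t k| * v ^ k ≤ |t k| * v ^ (2 * m - 1) := by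
        intro k hk
        have hk2 : k ≤ 2 * m - 1 := (Finset.mem_Icc.mp hk).2
        exact mul_le_mul_of_nonneg_left (pow_le_pow_right₀ hv1 hk2) (abs_nonneg _)
      calc ∑ k ∈ Finset.Icc 1 (2 * m - 1), |t k| * v ^ k
          ≤ ∑ k ∈ Finset.Icc 1 (2 * m - 1), |t k| * v ^ (2 * m - 1) := Finset.sum_le_sum h1
        _ = (∑ k ∈ Finset.Icc 1 (2 * m - 1), |t k|) * v ^ (2 * m - 1) := by rw [Finset.sum_mul]
        _ ≤ T * v ^ (2 * m - 1) := by
            apply mul_le_mul_of_nonneg_right _ (by positivity)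
            apply Finset.sum_le_sum_of_subset_of_nonneg
            · apply Finset.Icc_subset_Icc_right; omega
            · intro k _ _; exact abs_nonneg _
    have hpow : t (2 * m) * v ^ (2 * m) = (t (2 * m) * v) * v ^ (2 * m - 1) := by
      have hv2 : v ^ (2 * m) = v ^ (2 * m - 1) * v := by
        conv_lhs => rw [← h2m]
        rw [pow_succ]
      rw [hv2]; ring
    have h0 : 0 ≤ (∑ k ∈ Finset.Icc 1 (2 * m - 1), t k * u ^ (-(k : ℤ)))
        + t (2 * m) * v ^ (2 * m) := by
      have : T * v ^ (2 * m - 1) ≤ (t (2 * m) * v) * v ^ (2 * m - 1) :=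
        mul_le_mul_of_nonneg_right hTv.le (by positivity)
      rw [hpow]
      linarith [hsum_rest, hbd]
    rw [hsplit, htop]
    linarith [polB_nonneg m t, h0]



lemma wz_le (m n : ℕ) (hm : 1 ≤ m) (t : ℕ → ℝ) (ht : 0 < t (2 * m)) (y : ℝ) :
    wz m n t y ≤ Real.exp ((n : ℝ) * polB m t) := by
  unfold wz
  split
  · exact (Real.exp_pos _).le
  · apply Real.exp_le_exp.mpr
    have := pole_sum_lb m hm t ht y (by assumption)
    have hn : (0:ℝ) ≤ (n:ℝ) := Nat.cast_nonneg n
    nlinarith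

/-- `t^N ≤ N! e^t` for `t ≥ 0`. -/
lemma pow_le_factorial_mul_exp (x : ℝ) (hx : 0 ≤ x) (N : ℕ) :
    x ^ N ≤ (N.factorial : ℝ) * Real.exp x := by
  have h1 : x ^ N / (N.factorial : ℝ) ≤ Real.exp x := by
    have h2 : x ^ N / (N.factorial : ℝ) ≤ ∑ i ∈ Finset.range (N + 1), x ^ i / i.factorial := by
      exact Finset.single_le_sum (f := fun i => x ^ i / (i.factorial : ℝ))
        (fun i _ => by positivity) (Finset.self_mem_range_succ N)
    exact h2.trans (Real.sum_le_exp_of_nonneg hx (N + 1))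
  have hf : (0:ℝ) < (N.factorial : ℝ) := by exact_mod_cast N.factorial_pos
  rw [div_le_iff₀ hf] at h1
  linarith [h1]

/-- Gaussian absolute moments are integrable. -/
lemma integrable_abs_pow_gauss (N : ℕ) (b : ℝ) (hb : 0 < b) :
    Integrable fun x : ℝ => |x| ^ N * Real.exp (-b * x ^ 2) := by
  have hbound : ∀ x : ℝ, |x| ^ N * Real.exp (-b * x ^ 2)
      ≤ Real.exp (-b * x ^ 2)
        + (N.factorial : ℝ) * (2 / b) ^ N * Real.exp (-(b / 2) * x ^ 2) := by
    intro x
    have h1 : |x| ^ N ≤ 1 + x ^ (2 * N) := by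
      rcases le_or_gt (|x|) 1 with h | h
      · have : |x| ^ N ≤ 1 := pow_le_one₀ (abs_nonneg x) h
        have h2 : 0 ≤ x ^ (2 * N) := by
          have : x ^ (2 * N) = (x ^ N) ^ 2 := by rw [← pow_mul, mul_comm]
          rw [this]; positivity
        linarith
      · have h2 : |x| ^ N ≤ |x| ^ (2 * N) := pow_le_pow_right₀ h.le (by omega)
        have h3 : |x| ^ (2 * N) = x ^ (2 * N) := by
          rw [← abs_pow, abs_of_nonneg]
          have : x ^ (2 * N) = (x ^ N) ^ 2 := by rw [← pow_mul, mul_comm]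
          rw [this]; positivity
        rw [h3] at h2; linarith
    have h2 : x ^ (2 * N) * Real.exp (-b * x ^ 2)
        ≤ (N.factorial : ℝ) * (2 / b) ^ N * Real.exp (-(b / 2) * x ^ 2) := by
      have key : x ^ (2 * N) ≤ (N.factorial : ℝ) * (2 / b) ^ N * Real.exp ((b / 2) * x ^ 2) := by
        have h3 := pow_le_factorial_mul_exp ((b / 2) * x ^ 2) (by positivity) N
        have h4 : ((b / 2) * x ^ 2) ^ N = (b / 2) ^ N * x ^ (2 * N) := by
          rw [mul_pow, ← pow_mul, mul_comm 2 N]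
        rw [h4] at h3
        have h5 : (0:ℝ) < (b / 2) ^ N := by positivity
        rw [← le_div_iff₀' h5] at h3
        calc x ^ (2 * N) ≤ (N.factorial : ℝ) * Real.exp ((b / 2) * x ^ 2) / (b / 2) ^ N := h3
          _ = (N.factorial : ℝ) * (2 / b) ^ N * Real.exp ((b / 2) * x ^ 2) := by
              rw [div_pow]
              field_simp
              rw [← mul_pow]; congr 1; field_simp
      calc x ^ (2 * N) * Real.exp (-b * x ^ 2)
          ≤ ((N.factorial : ℝ) * (2 / b) ^ N * Real.exp ((b / 2) * x ^ 2))
            * Real.exp (-b * x ^ 2) := by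
            apply mul_le_mul_of_nonneg_right key (Real.exp_nonneg _)
        _ = (N.factorial : ℝ) * (2 / b) ^ N * Real.exp (-(b / 2) * x ^ 2) := by
            rw [mul_assoc, ← Real.exp_add]
            congr 2; ring
    have hnn : 0 ≤ Real.exp (-b * x ^ 2) := Real.exp_nonneg _
    nlinarith [mul_le_mul_of_nonneg_right h1 hnn]
  have hg : Integrable fun x : ℝ => Real.exp (-b * x ^ 2)
      + (N.factorial : ℝ) * (2 / b) ^ N * Real.exp (-(b / 2) * x ^ 2) :=
    (integrable_exp_neg_mul_sq hb).add
      (((integrable_exp_neg_mul_sq (by positivity : (0:ℝ) < b / 2))).const_mul _)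
  apply hg.mono'
  · apply Measurable.aestronglyMeasurable
    exact ((measurable_id.abs.pow_const N).mul
      (((measurable_id.pow_const 2).const_mul (-b)).exp))
  · filter_upwards with x
    rw [Real.norm_eq_abs, abs_of_nonneg (by positivity)]
    exact hbound x




variable {m n : ℕ} {t : ℕ → ℝ} {P : ℝ → ℕ → Polynomial ℝ} {γ : ℝ → ℕ → ℝ}

lemma op_meas (lam : ℝ) (r s : Polynomial ℝ) :
    AEStronglyMeasurable (fun x => r.eval x * s.eval x * wfun m n lam t x)
      (volume : Measure ℝ) :=
  ((r.continuous.measurable.mul s.continuous.measurable).mul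
    (wfun_meas m n lam t)).aestronglyMeasurable

lemma op_same_int (hOP : orthoFam m n t P γ) (lam : ℝ) (j : ℕ) :
    Integrable (fun x => (P lam j).eval x * (P lam j).eval x * wfun m n lam t x) := by
  by_contra h
  have h0 := hOP.2.2.2 lam j j
  rw [integral_undef h, if_pos rfl] at h0
  have := hOP.2.2.1 lam j
  have h2 : (0:ℝ) < (γ lam j) ^ (-(2:ℤ)) := zpow_pos this _
  rw [← h0] at h2
  exact lt_irrefl 0 h2

lemma op_pair_int (hOP : orthoFam m n t P γ) (lam : ℝ) (j k : ℕ) :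
    Integrable (fun x => (P lam j).eval x * (P lam k).eval x * wfun m n lam t x) := by
  have hg : Integrable (fun x => (1/2 : ℝ) *
      ((P lam j).eval x * (P lam j).eval x * wfun m n lam t x
        + (P lam k).eval x * (P lam k).eval x * wfun m n lam t x)) :=
    ((op_same_int hOP lam j).add (op_same_int hOP lam k)).const_mul _
  apply hg.mono' (op_meas lam _ _)
  filter_upwards with x
  have hw := wfun_nonneg m n lam t x
  set a := (P lam j).eval x
  set b := (P lam k).eval x
  rw [Real.norm_eq_abs, abs_mul, abs_mul, abs_of_nonneg hw]
  have h1 : |a| * |a| = a * a := abs_mul_abs_self a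
  have h2 : |b| * |b| = b * b := abs_mul_abs_self b
  nlinarith [sq_nonneg (|a| - |b|), abs_nonneg a, abs_nonneg b]

lemma degree_helper (p : Polynomial ℝ) (e : ℕ) (h1 : p.natDegree ≤ e) (h2 : p.coeff e = 0) :
    p.natDegree < e ∨ p = 0 := by
  by_cases hp : p = 0
  · exact Or.inr hp
  · left
    rcases lt_or_eq_of_le h1 with h | h
    · exact h
    · exfalso
      have := Polynomial.leadingCoeff_ne_zero.mpr hp
      rw [Polynomial.leadingCoeff, h] at this
      exact this h2

lemma coeff_self (hOP : orthoFam m n t P γ) (lam : ℝ) (e : ℕ) : (P lam e).coeff e = 1 := by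
  have h := (hOP.1 lam e).coeff_natDegree
  rwa [hOP.2.1 lam e] at h

/-- Key orthogonality engine: integrability against `P j · w` for arbitrary polynomials,
and vanishing of the integral for degrees `< j`. -/
lemma op_key (hOP : orthoFam m n t P γ) (lam : ℝ) (j : ℕ) :
    ∀ d : ℕ, ∀ r : Polynomial ℝ, r.natDegree ≤ d →
      Integrable (fun x => r.eval x * (P lam j).eval x * wfun m n lam t x) ∧
      (r.natDegree < j →
        ∫ x, r.eval x * (P lam j).eval x * wfun m n lam t x = 0) := by
  intro d
  induction d using Nat.strong_induction_on with
  | _ d ih =>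
    intro r hr
    by_cases h0 : r = 0
    · subst h0
      constructor
      · simp only [Polynomial.eval_zero, zero_mul]
        exact integrable_zero ℝ ℝ (volume : Measure ℝ)
      · intro _; simp
    set e := r.natDegree with he
    set c := r.coeff e with hc
    set r' := r - Polynomial.C c * P lam e with hr'
    have hre : ∀ x, r.eval x = c * (P lam e).eval x + r'.eval x := by
      intro x
      simp only [hr', Polynomial.eval_sub, Polynomial.eval_mul, Polynomial.eval_C]
      ring
    have hcoeffe : r'.coeff e = 0 := by
      simp [hr', hc, Polynomial.coeff_C_mul, coeff_self hOP lam e]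
    have hdegCP : (Polynomial.C c * P lam e).natDegree ≤ e :=
      (Polynomial.natDegree_C_mul_le _ _).trans (le_of_eq (hOP.2.1 lam e))
    have hdegr' : r'.natDegree ≤ e :=
      (Polynomial.natDegree_sub_le _ _).trans (max_le le_rfl hdegCP)
    have hint_ce : Integrable
        (fun x => c * ((P lam e).eval x * (P lam j).eval x * wfun m n lam t x)) :=
      (op_pair_int hOP lam e j).const_mul c
    rcases degree_helper r' e hdegr' hcoeffe with hlt | hz
    · have hih := ih r'.natDegree (lt_of_lt_of_le hlt hr) r' le_rfl
      have hfeq : (fun x => r.eval x * (P lam j).eval x * wfun m n lam t x)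
          = fun x => c * ((P lam e).eval x * (P lam j).eval x * wfun m n lam t x)
            + r'.eval x * (P lam j).eval x * wfun m n lam t x := by
        funext x; rw [hre x]; ring
      constructor
      · rw [hfeq]; exact hint_ce.add hih.1
      · intro hj
        rw [hfeq, integral_add hint_ce hih.1, integral_const_mul c _,
          hOP.2.2.2 lam e j, if_neg (Nat.ne_of_lt hj), hih.2 (lt_of_lt_of_le hlt (le_of_lt hj))]
        ring
    · have hfeq : (fun x => r.eval x * (P lam j).eval x * wfun m n lam t x)
          = fun x => c * ((P lam e).eval x * (P lam j).eval x * wfun m n lam t x) := by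
        funext x
        have : r'.eval x = 0 := by rw [hz]; simp
        rw [hre x, this]; ring
      constructor
      · rw [hfeq]; exact hint_ce
      · intro hj
        rw [hfeq, integral_const_mul c _, hOP.2.2.2 lam e j, if_neg (Nat.ne_of_lt hj)]
        ring

/-- recurrence coefficient -/
def ccoef (P : ℝ → ℕ → Polynomial ℝ) (lam : ℝ) (j : ℕ) : ℝ :=
  (Polynomial.X * P lam j - P lam (j + 1)).coeff j

lemma moment_eq (hOP : orthoFam m n t P γ) (lam : ℝ) (j : ℕ) :
    ∫ x, x * (P lam j).eval x * ((P lam j).eval x * wfun m n lam t x)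
      = ccoef P lam j * (γ lam j) ^ (-(2:ℤ)) := by
  classical
  set s : Polynomial ℝ := Polynomial.X * P lam j - P lam (j + 1) with hs
  have hsdeg : s.natDegree ≤ j := by
    rw [Polynomial.natDegree_le_iff_coeff_eq_zero]
    intro k hk
    obtain ⟨l, rfl⟩ : ∃ l, k = l + 1 := ⟨k - 1, by omega⟩
    have hl : j ≤ l := by omega
    rw [hs, Polynomial.coeff_sub, Polynomial.coeff_X_mul]
    rcases eq_or_lt_of_le hl with h | h
    · rw [← h, coeff_self hOP lam j, coeff_self hOP lam (j + 1)]
      ring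
    · rw [Polynomial.coeff_eq_zero_of_natDegree_lt, Polynomial.coeff_eq_zero_of_natDegree_lt]
      · ring
      · rw [hOP.2.1 lam (j + 1)]; omega
      · rw [hOP.2.1 lam j]; exact h
  set q : Polynomial ℝ := s - Polynomial.C (ccoef P lam j) * P lam j with hq
  have hqcoeff : q.coeff j = 0 := by
    rw [hq, Polynomial.coeff_sub, Polynomial.coeff_C_mul, coeff_self hOP lam j]
    simp [ccoef, hs]
  have hqdeg : q.natDegree ≤ j :=
    (Polynomial.natDegree_sub_le _ _).trans (max_le hsdeg
      ((Polynomial.natDegree_C_mul_le _ _).trans (le_of_eq (hOP.2.1 lam j))))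
  -- pointwise decomposition x * Pj x = P(j+1) x + cc * Pj x + q x
  have hdecomp : ∀ x : ℝ, x * (P lam j).eval x
      = (P lam (j+1)).eval x + ccoef P lam j * (P lam j).eval x + q.eval x := by
    intro x
    simp only [hq, hs, Polynomial.eval_sub, Polynomial.eval_mul, Polynomial.eval_C,
      Polynomial.eval_X]
    ring
  have hint1 : Integrable
      (fun x => (P lam (j+1)).eval x * ((P lam j).eval x * wfun m n lam t x)) := by
    have := op_pair_int hOP lam (j+1) j
    simpa [mul_assoc] using this
  have hint2 : Integrable
      (fun x => ccoef P lam j * ((P lam j).eval x * ((P lam j).eval x * wfun m n lam t x))) := by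
    have := (op_same_int hOP lam j).const_mul (ccoef P lam j)
    simpa [mul_assoc] using this
  have hkey := op_key hOP lam j q.natDegree q le_rfl
  have hint3 : Integrable (fun x => q.eval x * ((P lam j).eval x * wfun m n lam t x)) := by
    have := hkey.1
    simpa [mul_assoc] using this
  have hfeq : (fun x => x * (P lam j).eval x * ((P lam j).eval x * wfun m n lam t x))
      = fun x => (P lam (j+1)).eval x * ((P lam j).eval x * wfun m n lam t x)
        + (ccoef P lam j * ((P lam j).eval x * ((P lam j).eval x * wfun m n lam t x))
          + q.eval x * ((P lam j).eval x * wfun m n lam t x)) := by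
    funext x
    rw [show x * (P lam j).eval x * ((P lam j).eval x * wfun m n lam t x)
        = (x * (P lam j).eval x) * ((P lam j).eval x * wfun m n lam t x) by ring, hdecomp x]
    ring
  have hint23 : Integrable (fun x =>
      ccoef P lam j * ((P lam j).eval x * ((P lam j).eval x * wfun m n lam t x))
        + q.eval x * ((P lam j).eval x * wfun m n lam t x)) := hint2.add hint3
  rw [hfeq, integral_add hint1 hint23, integral_add hint2 hint3, integral_const_mul]
  have e1 : ∫ x, (P lam (j+1)).eval x * ((P lam j).eval x * wfun m n lam t x) = 0 := by
    have := hOP.2.2.2 lam (j+1) j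
    rw [if_neg (by omega)] at this
    rw [← this]
    congr 1; funext x; ring
  have e2 : ∫ x, (P lam j).eval x * ((P lam j).eval x * wfun m n lam t x)
      = (γ lam j) ^ (-(2:ℤ)) := by
    have := hOP.2.2.2 lam j j
    rw [if_pos rfl] at this
    rw [← this]
    congr 1; funext x; ring
  have e3 : ∫ x, q.eval x * ((P lam j).eval x * wfun m n lam t x) = 0 := by
    rcases degree_helper q j hqdeg hqcoeff with hlt | hz
    · have := hkey.2 hlt
      rw [← this]
      congr 1; funext x; ring
    · rw [hz]; simp
  rw [e1, e2, e3]
  ring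

lemma ccoef_sum (hOP : orthoFam m n t P γ) (lam : ℝ) (N : ℕ) (hN : 1 ≤ N) :
    ∑ j ∈ Finset.range N, ccoef P lam j = -(P lam N).coeff (N - 1) := by
  classical
  set pp : ℕ → ℝ := fun j => if j = 0 then 0 else (P lam j).coeff (j - 1) with hpp
  have hcc : ∀ j, ccoef P lam j = pp j - pp (j + 1) := by
    intro j
    rcases Nat.eq_zero_or_pos j with h0 | hpos
    · subst h0
      rw [ccoef, Polynomial.coeff_sub, Polynomial.mul_coeff_zero]
      simp [hpp]
    · obtain ⟨l, rfl⟩ : ∃ l, j = l + 1 := ⟨j - 1, by omega⟩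
      rw [ccoef, Polynomial.coeff_sub, Polynomial.coeff_X_mul, hpp]
      simp only []
      rw [if_neg (Nat.succ_ne_zero l), if_neg (Nat.succ_ne_zero (l + 1))]
      simp
  calc ∑ j ∈ Finset.range N, ccoef P lam j
      = ∑ j ∈ Finset.range N, (pp j - pp (j + 1)) := by
        exact Finset.sum_congr rfl fun j _ => hcc j
    _ = pp 0 - pp N := Finset.sum_range_sub' pp N
    _ = -(P lam N).coeff (N - 1) := by
        have hN0 : N ≠ 0 := by omega
        rw [hpp]; simp [hN0]




variable {m n : ℕ} {t : ℕ → ℝ} {P : ℝ → ℕ → Polynomial ℝ} {γ : ℝ → ℕ → ℝ}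

/-- A permutation agreeing with another off one point agrees everywhere. -/
lemma perm_eq_of_eq_off {n : ℕ} (k : Fin n) (σ τ : Equiv.Perm (Fin n))
    (h : ∀ i, i ≠ k → σ i = τ i) : σ = τ := by
  have hk : σ k = τ k := by
    set j := τ.symm (σ k) with hj
    have hτj : τ j = σ k := τ.apply_symm_apply (σ k)
    by_cases hjk : j = k
    · rw [hjk] at hτj; exact hτj.symm
    · exfalso
      have hσj : σ j = τ j := h j hjk
      have hss : σ j = σ k := by rw [hσj, hτj]
      exact hjk (σ.injective hss)
  refine Equiv.ext fun i => ?_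
  by_cases hik : i = k
  · rw [hik]; exact hk
  · exact h i hik

section multi

/-- sign as a real number -/
def esgn {n : ℕ} (σ : Equiv.Perm (Fin n)) : ℝ := ((Equiv.Perm.sign σ : ℤ) : ℝ)

lemma esgn_sq {n : ℕ} (σ : Equiv.Perm (Fin n)) : esgn σ * esgn σ = 1 := by
  unfold esgn
  rcases Int.units_eq_one_or (Equiv.Perm.sign σ) with h | h <;> rw [h] <;> norm_num

lemma det_D (hOP : orthoFam m n t P γ) (lam : ℝ) (x : Fin n → ℝ) :
    (∏ i : Fin n, ∏ j : Fin n, if i < j then (x j - x i) ^ 2 else 1)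
      = (Matrix.det (Matrix.of fun i j : Fin n => (P lam (j : ℕ)).eval (x i))) ^ 2 := by
  have h1 : ∀ i : Fin n, (∏ j : Fin n, if i < j then (x j - x i) ^ 2 else 1)
      = ∏ j ∈ Finset.Ioi i, (x j - x i) ^ 2 := by
    intro i
    rw [← Finset.prod_filter]
    congr 1
    ext j; simp
  calc (∏ i : Fin n, ∏ j : Fin n, if i < j then (x j - x i) ^ 2 else 1)
      = ∏ i : Fin n, ∏ j ∈ Finset.Ioi i, (x j - x i) ^ 2 := Finset.prod_congr rfl fun i _ => h1 i
    _ = ∏ i : Fin n, (∏ j ∈ Finset.Ioi i, (x j - x i)) ^ 2 := by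
        exact Finset.prod_congr rfl fun i _ => Finset.prod_pow _ 2 _
    _ = (∏ i : Fin n, ∏ j ∈ Finset.Ioi i, (x j - x i)) ^ 2 := Finset.prod_pow _ 2 _
    _ = (Matrix.det (Matrix.vandermonde x)) ^ 2 := by rw [Matrix.det_vandermonde]
    _ = (Matrix.det (Matrix.of fun i j : Fin n => (P lam (j : ℕ)).eval (x i))) ^ 2 := by
        rw [Matrix.det_eval_matrixOfPolynomials_eq_det_vandermonde x
          (fun j : Fin n => P lam (j : ℕ)) (fun i => hOP.2.1 lam i) (fun i => hOP.1 lam i)]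

lemma det_expand (lam : ℝ) (x : Fin n → ℝ) :
    Matrix.det (Matrix.of fun i j : Fin n => (P lam (j : ℕ)).eval (x i))
      = ∑ σ : Equiv.Perm (Fin n), esgn σ * ∏ i : Fin n, (P lam ((σ i : ℕ))).eval (x i) := by
  have hT : Matrix.det (Matrix.of fun i j : Fin n => (P lam (j : ℕ)).eval (x i))
      = Matrix.det (Matrix.of fun i j : Fin n => (P lam (i : ℕ)).eval (x j)) := by
    rw [← Matrix.det_transpose (Matrix.of fun i j : Fin n => (P lam (i : ℕ)).eval (x j))]
    rfl
  rw [hT, Matrix.det_apply']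
  rfl

/-- pointwise expansion of the full integrand -/
lemma point_expand (hOP : orthoFam m n t P γ) (lam : ℝ) (x : Fin n → ℝ) :
    (∏ i : Fin n, ∏ j : Fin n, if i < j then (x j - x i) ^ 2 else 1)
        * ∏ j : Fin n, wfun m n lam t (x j)
      = ∑ σ : Equiv.Perm (Fin n), ∑ τ : Equiv.Perm (Fin n), esgn σ * esgn τ *
          ∏ i : Fin n, ((P lam ((σ i : ℕ))).eval (x i) * (P lam ((τ i : ℕ))).eval (x i)
            * wfun m n lam t (x i)) := by
  rw [det_D hOP lam x, sq, det_expand lam x, Finset.sum_mul_sum, Finset.sum_mul]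
  refine Finset.sum_congr rfl fun σ _ => ?_
  rw [Finset.sum_mul]
  refine Finset.sum_congr rfl fun τ _ => ?_
  have : ∏ i : Fin n, ((P lam ((σ i : ℕ))).eval (x i) * (P lam ((τ i : ℕ))).eval (x i)
      * wfun m n lam t (x i))
      = (∏ i : Fin n, (P lam ((σ i : ℕ))).eval (x i))
        * (∏ i : Fin n, (P lam ((τ i : ℕ))).eval (x i))
        * ∏ i : Fin n, wfun m n lam t (x i) := by
    rw [← Finset.prod_mul_distrib, ← Finset.prod_mul_distrib]
  rw [this]
  ring

lemma term_int (hOP : orthoFam m n t P γ) (lam : ℝ) (σ τ : Equiv.Perm (Fin n)) :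
    Integrable (fun x : Fin n → ℝ =>
      ∏ i : Fin n, ((P lam ((σ i : ℕ))).eval (x i) * (P lam ((τ i : ℕ))).eval (x i)
        * wfun m n lam t (x i))) :=
  Integrable.fintype_prod (fun i => op_pair_int hOP lam (σ i) (τ i))

lemma term_val (hOP : orthoFam m n t P γ) (lam : ℝ) (σ τ : Equiv.Perm (Fin n)) :
    (∫ x : Fin n → ℝ,
      ∏ i : Fin n, ((P lam ((σ i : ℕ))).eval (x i) * (P lam ((τ i : ℕ))).eval (x i)
        * wfun m n lam t (x i)))
      = if σ = τ then ∏ i : Fin n, (γ lam (i : ℕ)) ^ (-(2:ℤ)) else 0 := by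
  rw [MeasureTheory.integral_fintype_prod_volume_eq_prod
    (f := fun (i : Fin n) (y : ℝ) => (P lam ((σ i : ℕ))).eval y * (P lam ((τ i : ℕ))).eval y
      * wfun m n lam t y)]
  by_cases h : σ = τ
  · subst h
    rw [if_pos rfl]
    have : ∀ i : Fin n, (∫ y : ℝ, (P lam ((σ i : ℕ))).eval y * (P lam ((σ i : ℕ))).eval y
        * wfun m n lam t y) = (γ lam ((σ i : ℕ))) ^ (-(2:ℤ)) := by
      intro i
      have := hOP.2.2.2 lam (σ i) (σ i)
      rwa [if_pos rfl] at this
    rw [Finset.prod_congr rfl fun i _ => this i]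
    exact Equiv.prod_comp σ (fun i : Fin n => (γ lam (i : ℕ)) ^ (-(2:ℤ)))
  · rw [if_neg h]
    obtain ⟨i, hi⟩ : ∃ i, σ i ≠ τ i := by
      by_contra hc
      push_neg at hc
      exact h (Equiv.ext hc)
    apply Finset.prod_eq_zero (Finset.mem_univ i)
    have := hOP.2.2.2 lam (σ i) (τ i)
    rwa [if_neg (fun hc => hi (Fin.ext hc))] at this

lemma I0_val (hOP : orthoFam m n t P γ) (lam : ℝ) :
    (∫ x : Fin n → ℝ,
      (∏ i : Fin n, ∏ j : Fin n, if i < j then (x j - x i) ^ 2 else 1)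
        * ∏ j : Fin n, wfun m n lam t (x j))
      = (n.factorial : ℝ) * ∏ i : Fin n, (γ lam (i : ℕ)) ^ (-(2:ℤ)) := by
  have hfe : (fun x : Fin n → ℝ =>
      (∏ i : Fin n, ∏ j : Fin n, if i < j then (x j - x i) ^ 2 else 1)
        * ∏ j : Fin n, wfun m n lam t (x j))
      = fun x => ∑ σ : Equiv.Perm (Fin n), ∑ τ : Equiv.Perm (Fin n), esgn σ * esgn τ *
          ∏ i : Fin n, ((P lam ((σ i : ℕ))).eval (x i) * (P lam ((τ i : ℕ))).eval (x i)
            * wfun m n lam t (x i)) := funext (point_expand hOP lam)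
  rw [hfe]
  rw [integral_finset_sum _ (fun σ _ => integrable_finset_sum _
    (fun τ _ => (term_int hOP lam σ τ).const_mul _))]
  have h1 : ∀ σ : Equiv.Perm (Fin n),
      (∫ x : Fin n → ℝ, ∑ τ : Equiv.Perm (Fin n), esgn σ * esgn τ *
        ∏ i : Fin n, ((P lam ((σ i : ℕ))).eval (x i) * (P lam ((τ i : ℕ))).eval (x i)
          * wfun m n lam t (x i)))
      = ∏ i : Fin n, (γ lam (i : ℕ)) ^ (-(2:ℤ)) := by
    intro σ
    rw [integral_finset_sum _ (fun τ _ => (term_int hOP lam σ τ).const_mul _)]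
    have h2 : ∀ τ : Equiv.Perm (Fin n),
        (∫ x : Fin n → ℝ, esgn σ * esgn τ *
          ∏ i : Fin n, ((P lam ((σ i : ℕ))).eval (x i) * (P lam ((τ i : ℕ))).eval (x i)
            * wfun m n lam t (x i)))
        = if σ = τ then ∏ i : Fin n, (γ lam (i : ℕ)) ^ (-(2:ℤ)) else 0 := by
      intro τ
      rw [integral_const_mul, term_val hOP lam σ τ]
      by_cases h : σ = τ
      · subst h; rw [if_pos rfl, esgn_sq, one_mul]
      · rw [if_neg h, mul_zero]
    rw [Finset.sum_congr rfl fun τ _ => h2 τ, Finset.sum_ite_eq _ σ _, if_pos (Finset.mem_univ σ)]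
  rw [Finset.sum_congr rfl fun σ _ => h1 σ, Finset.sum_const, Finset.card_univ,
    Fintype.card_perm, Fintype.card_fin, nsmul_eq_mul]

/-- the per-(k,σ,τ) factor for the first-moment integral -/
lemma term1_int (hOP : orthoFam m n t P γ) (lam : ℝ) (k : Fin n) (σ τ : Equiv.Perm (Fin n)) :
    Integrable (fun x : Fin n → ℝ =>
      ∏ i : Fin n, ((if i = k then x i else 1) * ((P lam ((σ i : ℕ))).eval (x i)
        * (P lam ((τ i : ℕ))).eval (x i) * wfun m n lam t (x i)))) := by
  apply Integrable.fintype_prod (f := fun (i : Fin n) (y : ℝ) =>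
    (if i = k then y else 1) * ((P lam ((σ i : ℕ))).eval y
      * (P lam ((τ i : ℕ))).eval y * wfun m n lam t y))
  intro i
  by_cases hik : i = k
  · have hxp := (op_key hOP lam (τ i) (Polynomial.X * P lam ((σ i : ℕ))).natDegree
      (Polynomial.X * P lam ((σ i : ℕ))) le_rfl).1
    have heq : (fun y : ℝ => (if i = k then y else 1) * ((P lam ((σ i : ℕ))).eval y
        * (P lam ((τ i : ℕ))).eval y * wfun m n lam t y))
        = fun y => (Polynomial.X * P lam ((σ i : ℕ))).eval y
          * (P lam ((τ i : ℕ))).eval y * wfun m n lam t y := by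
      funext y
      rw [if_pos hik, Polynomial.eval_mul, Polynomial.eval_X]
      ring
    rw [heq]; exact hxp
  · have heq : (fun y : ℝ => (if i = k then y else 1) * ((P lam ((σ i : ℕ))).eval y
        * (P lam ((τ i : ℕ))).eval y * wfun m n lam t y))
        = fun y => (P lam ((σ i : ℕ))).eval y * (P lam ((τ i : ℕ))).eval y
          * wfun m n lam t y := by
      funext y; rw [if_neg hik]; ring
    rw [heq]; exact op_pair_int hOP lam _ _

lemma term1_val (hOP : orthoFam m n t P γ) (lam : ℝ) (k : Fin n) (σ τ : Equiv.Perm (Fin n)) :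
    (∫ x : Fin n → ℝ,
      ∏ i : Fin n, ((if i = k then x i else 1) * ((P lam ((σ i : ℕ))).eval (x i)
        * (P lam ((τ i : ℕ))).eval (x i) * wfun m n lam t (x i))))
      = if σ = τ then ccoef P lam ((σ k : ℕ)) * ∏ i : Fin n, (γ lam (i : ℕ)) ^ (-(2:ℤ))
        else 0 := by
  rw [MeasureTheory.integral_fintype_prod_volume_eq_prod
    (f := fun (i : Fin n) (y : ℝ) => (if i = k then y else 1) * ((P lam ((σ i : ℕ))).eval y
      * (P lam ((τ i : ℕ))).eval y * wfun m n lam t y))]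
  by_cases h : σ = τ
  · subst h
    rw [if_pos rfl]
    have hval : ∀ i : Fin n, (∫ y : ℝ, (if i = k then y else 1) * ((P lam ((σ i : ℕ))).eval y
        * (P lam ((σ i : ℕ))).eval y * wfun m n lam t y))
        = (if i = k then ccoef P lam ((σ k : ℕ)) else 1) * (γ lam ((σ i : ℕ))) ^ (-(2:ℤ)) := by
      intro i
      by_cases hik : i = k
      · rw [if_pos hik]
        have : (fun y : ℝ => (if i = k then y else 1) * ((P lam ((σ i : ℕ))).eval y
            * (P lam ((σ i : ℕ))).eval y * wfun m n lam t y))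
            = fun y => y * (P lam ((σ i : ℕ))).eval y
              * ((P lam ((σ i : ℕ))).eval y * wfun m n lam t y) := by
          funext y; rw [if_pos hik]; ring
        rw [this, moment_eq hOP lam ((σ i : ℕ)), hik]
      · rw [if_neg hik, one_mul]
        have : (fun y : ℝ => (if i = k then y else 1) * ((P lam ((σ i : ℕ))).eval y
            * (P lam ((σ i : ℕ))).eval y * wfun m n lam t y))
            = fun y => (P lam ((σ i : ℕ))).eval y * (P lam ((σ i : ℕ))).eval y
              * wfun m n lam t y := by
          funext y; rw [if_neg hik]; ring
        rw [this]
        have := hOP.2.2.2 lam (σ i) (σ i)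
        rwa [if_pos rfl] at this
    rw [Finset.prod_congr rfl fun i _ => hval i, Finset.prod_mul_distrib,
      Finset.prod_ite_eq' Finset.univ k (fun _ => ccoef P lam ((σ k : ℕ))),
      if_pos (Finset.mem_univ k)]
    congr 1
    exact Equiv.prod_comp σ (fun i : Fin n => (γ lam (i : ℕ)) ^ (-(2:ℤ)))
  · rw [if_neg h]
    obtain ⟨i, hik, hi⟩ : ∃ i, i ≠ k ∧ σ i ≠ τ i := by
      by_contra hc
      push_neg at hc
      exact h (perm_eq_of_eq_off k σ τ (fun i hikk => hc i hikk))
    apply Finset.prod_eq_zero (Finset.mem_univ i)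
    have heq : (fun y : ℝ => (if i = k then y else 1) * ((P lam ((σ i : ℕ))).eval y
        * (P lam ((τ i : ℕ))).eval y * wfun m n lam t y))
        = fun y => (P lam ((σ i : ℕ))).eval y * (P lam ((τ i : ℕ))).eval y
          * wfun m n lam t y := by
      funext y; rw [if_neg hik]; ring
    rw [heq]
    have := hOP.2.2.2 lam (σ i) (τ i)
    rwa [if_neg (fun hcc => hi (Fin.ext hcc))] at this

lemma point_expand1 (hOP : orthoFam m n t P γ) (lam : ℝ) (x : Fin n → ℝ) :
    (∑ k : Fin n, x k) *
      ((∏ i : Fin n, ∏ j : Fin n, if i < j then (x j - x i) ^ 2 else 1)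
        * ∏ j : Fin n, wfun m n lam t (x j))
      = ∑ k : Fin n, ∑ σ : Equiv.Perm (Fin n), ∑ τ : Equiv.Perm (Fin n), esgn σ * esgn τ *
          ∏ i : Fin n, ((if i = k then x i else 1) * ((P lam ((σ i : ℕ))).eval (x i)
            * (P lam ((τ i : ℕ))).eval (x i) * wfun m n lam t (x i))) := by
  rw [point_expand hOP lam x, Finset.sum_mul]
  refine Finset.sum_congr rfl fun k _ => ?_
  rw [Finset.mul_sum]
  refine Finset.sum_congr rfl fun σ _ => ?_
  rw [Finset.mul_sum]
  refine Finset.sum_congr rfl fun τ _ => ?_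
  have hsplit : ∏ i : Fin n, ((if i = k then x i else 1) * ((P lam ((σ i : ℕ))).eval (x i)
      * (P lam ((τ i : ℕ))).eval (x i) * wfun m n lam t (x i)))
      = (∏ i : Fin n, (if i = k then x i else 1))
        * ∏ i : Fin n, ((P lam ((σ i : ℕ))).eval (x i)
          * (P lam ((τ i : ℕ))).eval (x i) * wfun m n lam t (x i)) :=
    Finset.prod_mul_distrib
  rw [hsplit, Finset.prod_ite_eq' Finset.univ k (fun i => x i), if_pos (Finset.mem_univ k)]
  ring

lemma I1_val (hOP : orthoFam m n t P γ) (lam : ℝ) :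
    (∫ x : Fin n → ℝ, (∑ k : Fin n, x k) *
      ((∏ i : Fin n, ∏ j : Fin n, if i < j then (x j - x i) ^ 2 else 1)
        * ∏ j : Fin n, wfun m n lam t (x j)))
      = (∑ j ∈ Finset.range n, ccoef P lam j)
        * ((n.factorial : ℝ) * ∏ i : Fin n, (γ lam (i : ℕ)) ^ (-(2:ℤ))) := by
  have hfe := funext (point_expand1 hOP lam)
  rw [hfe]
  rw [integral_finset_sum _ (fun k _ => integrable_finset_sum _
    (fun σ _ => integrable_finset_sum _ (fun τ _ => (term1_int hOP lam k σ τ).const_mul _)))]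
  have h1 : ∀ k : Fin n,
      (∫ x : Fin n → ℝ, ∑ σ : Equiv.Perm (Fin n), ∑ τ : Equiv.Perm (Fin n), esgn σ * esgn τ *
        ∏ i : Fin n, ((if i = k then x i else 1) * ((P lam ((σ i : ℕ))).eval (x i)
          * (P lam ((τ i : ℕ))).eval (x i) * wfun m n lam t (x i))))
      = ∑ σ : Equiv.Perm (Fin n),
          ccoef P lam ((σ k : ℕ)) * ∏ i : Fin n, (γ lam (i : ℕ)) ^ (-(2:ℤ)) := by
    intro k
    rw [integral_finset_sum _ (fun σ _ => integrable_finset_sum _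
      (fun τ _ => (term1_int hOP lam k σ τ).const_mul _))]
    refine Finset.sum_congr rfl fun σ _ => ?_
    rw [integral_finset_sum _ (fun τ _ => (term1_int hOP lam k σ τ).const_mul _)]
    have h2 : ∀ τ : Equiv.Perm (Fin n),
        (∫ x : Fin n → ℝ, esgn σ * esgn τ *
          ∏ i : Fin n, ((if i = k then x i else 1) * ((P lam ((σ i : ℕ))).eval (x i)
            * (P lam ((τ i : ℕ))).eval (x i) * wfun m n lam t (x i))))
        = if σ = τ then ccoef P lam ((σ k : ℕ)) * ∏ i : Fin n, (γ lam (i : ℕ)) ^ (-(2:ℤ))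
          else 0 := by
      intro τ
      rw [integral_const_mul, term1_val hOP lam k σ τ]
      by_cases h : σ = τ
      · subst h; rw [if_pos rfl, ← mul_assoc, esgn_sq, one_mul]
      · rw [if_neg h, mul_zero]
    rw [Finset.sum_congr rfl fun τ _ => h2 τ, Finset.sum_ite_eq _ σ _,
      if_pos (Finset.mem_univ σ)]
  rw [Finset.sum_congr rfl fun k _ => h1 k, Finset.sum_comm]
  have h3 : ∀ σ : Equiv.Perm (Fin n),
      (∑ k : Fin n, ccoef P lam ((σ k : ℕ)) * ∏ i : Fin n, (γ lam (i : ℕ)) ^ (-(2:ℤ)))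
      = (∑ j ∈ Finset.range n, ccoef P lam j) * ∏ i : Fin n, (γ lam (i : ℕ)) ^ (-(2:ℤ)) := by
    intro σ
    rw [← Finset.sum_mul]
    congr 1
    rw [Equiv.sum_comp σ (fun k : Fin n => ccoef P lam ((k : ℕ)))]
    exact Fin.sum_univ_eq_sum_range (fun j => ccoef P lam j) n
  rw [Finset.sum_congr rfl fun σ _ => h3 σ, Finset.sum_const, Finset.card_univ,
    Fintype.card_perm, Fintype.card_fin, nsmul_eq_mul]
  ring

end multi


/-- the squared Vandermonde factor -/
def Dv (n : ℕ) (x : Fin n → ℝ) : ℝ :=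
  ∏ i : Fin n, ∏ j : Fin n, if i < j then (x j - x i) ^ 2 else 1

lemma Dv_nonneg (n : ℕ) (x : Fin n → ℝ) : 0 ≤ Dv n x := by
  apply Finset.prod_nonneg
  intro i _
  apply Finset.prod_nonneg
  intro j _
  split <;> positivity

lemma Dv_cont (n : ℕ) : Continuous (Dv n) := by
  apply continuous_finset_prod
  intro i _
  apply continuous_finset_prod
  intro j _
  by_cases h : i < j
  · simpa [h] using (by fun_prop : Continuous fun a : Fin n → ℝ => (a j - a i) ^ 2)
  · simpa [h] using continuous_const

lemma Dv_shift (n : ℕ) (y : Fin n → ℝ) (l : ℝ) : Dv n (y + fun _ => l) = Dv n y := by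
  unfold Dv
  refine Finset.prod_congr rfl fun i _ => Finset.prod_congr rfl fun j _ => ?_
  by_cases h : i < j
  · rw [if_pos h, if_pos h]
    simp only [Pi.add_apply]
    ring
  · rw [if_neg h, if_neg h]

lemma one_add_pow_le (a : ℝ) (ha : 0 ≤ a) (M : ℕ) : (1 + a) ^ M ≤ 2 ^ M * (1 + a ^ M) := by
  have h1 : 1 + a ≤ 2 * max 1 a := by
    rcases le_total a 1 with h | h
    · have : max 1 a = 1 := max_eq_left h
      rw [this]; linarith
    · have : max 1 a = a := max_eq_right h
      rw [this]; linarith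
  have h2 : (1 + a) ^ M ≤ (2 * max 1 a) ^ M :=
    pow_le_pow_left₀ (by positivity) h1 M
  have h3 : (2 * max 1 a) ^ M = 2 ^ M * (max 1 a) ^ M := mul_pow 2 _ M
  have h4 : (max 1 a) ^ M ≤ 1 + a ^ M := by
    rcases le_total a 1 with h | h
    · rw [max_eq_left h, one_pow]
      have : 0 ≤ a ^ M := by positivity
      linarith
    · rw [max_eq_right h]
      have : (0:ℝ) ≤ 1 := zero_le_one
      linarith
  calc (1 + a) ^ M ≤ 2 ^ M * (max 1 a) ^ M := by rw [← h3]; exact h2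
    _ ≤ 2 ^ M * (1 + a ^ M) := by
        apply mul_le_mul_of_nonneg_left h4 (by positivity)

section deriv

variable (m n : ℕ) (t : ℕ → ℝ)

/-- the Gaussian part after recentering -/
def Sfn (n : ℕ) (l : ℝ) (y : Fin n → ℝ) : ℝ := ∑ j : Fin n, (-(2:ℝ) * n) * (y j + l) ^ 2

/-- integrand after recentering -/
def Ffn (m n : ℕ) (t : ℕ → ℝ) (l : ℝ) (y : Fin n → ℝ) : ℝ :=
  (Dv n y * ∏ j : Fin n, wz m n t (y j)) * Real.exp (Sfn n l y)

def Ffn' (m n : ℕ) (t : ℕ → ℝ) (l : ℝ) (y : Fin n → ℝ) : ℝ :=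
  (Dv n y * ∏ j : Fin n, wz m n t (y j)) * Real.exp (Sfn n l y)
    * ∑ j : Fin n, (-(2:ℝ) * n) * (2 * (y j + l))

lemma wprod_shift (l : ℝ) (y : Fin n → ℝ) :
    (∏ j : Fin n, wfun m n l t (y j + l))
      = (∏ j : Fin n, wz m n t (y j)) * Real.exp (Sfn n l y) := by
  have h1 : ∀ j : Fin n, wfun m n l t (y j + l)
      = Real.exp ((-(2:ℝ) * n) * (y j + l) ^ 2) * wz m n t (y j) := by
    intro j
    rw [wfun_eq_wz m n l t (y j + l), add_sub_cancel_right]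
    congr 2
    ring
  rw [Finset.prod_congr rfl fun j _ => h1 j, Finset.prod_mul_distrib, ← Real.exp_sum]
  rw [Sfn]
  ring

lemma Zn_shift (l : ℝ) : Zn m n l t = ∫ y : Fin n → ℝ, Ffn m n t l y := by
  set c : Fin n → ℝ := fun _ => l with hc
  have h0 : Zn m n l t = ∫ x : Fin n → ℝ, Dv n x * ∏ j : Fin n, wfun m n l t (x j) := rfl
  rw [h0, ← MeasureTheory.integral_add_right_eq_self
    (fun x : Fin n → ℝ => Dv n x * ∏ j : Fin n, wfun m n l t (x j)) c]
  refine integral_congr_ae (Eventually.of_forall fun y => ?_)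
  show Dv n (y + c) * (∏ j : Fin n, wfun m n l t ((y + c) j)) = Ffn m n t l y
  have h1 : Dv n (y + c) = Dv n y := Dv_shift n y l
  have h2 : (∏ j : Fin n, wfun m n l t ((y + c) j))
      = ∏ j : Fin n, wfun m n l t (y j + l) := by
    refine Finset.prod_congr rfl fun j _ => ?_
    simp [hc]
  rw [h1, h2, wprod_shift m n t l y, Ffn]
  ring

lemma Ffn_hasDeriv (l : ℝ) (y : Fin n → ℝ) :
    HasDerivAt (fun l' => Ffn m n t l' y) (Ffn' m n t l y) l := by
  have hS : HasDerivAt (fun l' => Sfn n l' y)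
      (∑ j : Fin n, (-(2:ℝ) * n) * (2 * (y j + l))) l := by
    have : ∀ j : Fin n, HasDerivAt (fun l' => (-(2:ℝ) * n) * (y j + l') ^ 2)
        ((-(2:ℝ) * n) * (2 * (y j + l))) l := by
      intro j
      have h1 : HasDerivAt (fun l' : ℝ => y j + l') 1 l := (hasDerivAt_id l).const_add (y j)
      have h2 := (h1.fun_pow 2).const_mul (-(2:ℝ) * n)
      refine h2.congr_deriv ?_
      norm_num
    exact HasDerivAt.fun_sum fun j _ => this j
  have hexp := hS.exp
  have := hexp.const_mul (Dv n y * ∏ j : Fin n, wz m n t (y j))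
  have heq : (fun l' => (Dv n y * ∏ j : Fin n, wz m n t (y j)) * Real.exp (Sfn n l' y))
      = fun l' => Ffn m n t l' y := rfl
  rw [heq] at this
  have heq2 : (Dv n y * ∏ j : Fin n, wz m n t (y j)) *
      (Real.exp (Sfn n l y) * ∑ j : Fin n, (-(2:ℝ) * n) * (2 * (y j + l)))
      = Ffn' m n t l y := by
    rw [Ffn']
    ring
  rw [heq2] at this
  exact this

end deriv

/-- one–dimensional dominating function -/
def hfun (n : ℕ) (Λ : ℝ) (u : ℝ) : ℝ :=
  (1 + u ^ 2) ^ (2 * n) * ((1 + |u|) + Λ) * Real.exp ((-(2:ℝ) * n) * u ^ 2 + 4 * n * Λ * |u|)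

lemma hfun_nonneg (n : ℕ) (Λ : ℝ) (hΛ : 0 ≤ Λ) (u : ℝ) : 0 ≤ hfun n Λ u := by
  unfold hfun
  have := abs_nonneg u
  positivity

lemma hfun_cont (n : ℕ) (Λ : ℝ) : Continuous (hfun n Λ) := by
  unfold hfun
  apply Continuous.mul
  · apply Continuous.mul
    · exact (continuous_const.add (continuous_pow 2)).pow _
    · exact (continuous_const.add continuous_abs).add continuous_const
  · apply Real.continuous_exp.comp
    exact (continuous_const.mul (continuous_pow 2)).add (continuous_const.mul continuous_abs)

lemma hfun_int (n : ℕ) (hn : 1 ≤ n) (Λ : ℝ) (hΛ : 0 ≤ Λ) : Integrable (hfun n Λ) := by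
  have hn' : (0:ℝ) < (n:ℝ) := by exact_mod_cast hn
  set C3 : ℝ := (1 + Λ) * 2 ^ (4 * n + 1) * Real.exp (4 * n * Λ ^ 2) with hC3
  have hC3nn : 0 ≤ C3 := by positivity
  have hbd : ∀ u : ℝ, hfun n Λ u ≤ C3 * (Real.exp (-(n:ℝ) * u ^ 2)
      + |u| ^ (4 * n + 1) * Real.exp (-(n:ℝ) * u ^ 2)) := by
    intro u
    have hau : 0 ≤ |u| := abs_nonneg u
    have hexp : Real.exp ((-(2:ℝ) * n) * u ^ 2 + 4 * n * Λ * |u|)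
        ≤ Real.exp (4 * n * Λ ^ 2) * Real.exp (-(n:ℝ) * u ^ 2) := by
      rw [← Real.exp_add]
      apply Real.exp_le_exp.mpr
      have h1 : 4 * Λ * |u| ≤ u ^ 2 + 4 * Λ ^ 2 := by
        have h2 := sq_nonneg (|u| - 2 * Λ)
        have h3 : |u| ^ 2 = u ^ 2 := sq_abs u
        nlinarith
      nlinarith [hn'.le]
    have hpoly : (1 + u ^ 2) ^ (2 * n) * ((1 + |u|) + Λ)
        ≤ (1 + Λ) * 2 ^ (4 * n + 1) * (1 + |u| ^ (4 * n + 1)) := by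
      have h1 : (1 + u ^ 2) ≤ (1 + |u|) ^ 2 := by
        have h3 : |u| ^ 2 = u ^ 2 := sq_abs u
        nlinarith
      have h2 : (1 + u ^ 2) ^ (2 * n) ≤ (1 + |u|) ^ (4 * n) := by
        calc (1 + u ^ 2) ^ (2 * n) ≤ ((1 + |u|) ^ 2) ^ (2 * n) := by
              apply pow_le_pow_left₀ (by positivity) h1
          _ = (1 + |u|) ^ (4 * n) := by rw [← pow_mul]; ring_nf
      have h3 : (1 + |u|) + Λ ≤ (1 + Λ) * (1 + |u|) := by nlinarith
      have h4 : (1 + u ^ 2) ^ (2 * n) * ((1 + |u|) + Λ)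
          ≤ (1 + |u|) ^ (4 * n) * ((1 + Λ) * (1 + |u|)) := by
        apply mul_le_mul h2 h3 (by positivity) (by positivity)
      have h5 : (1 + |u|) ^ (4 * n) * ((1 + Λ) * (1 + |u|))
          = (1 + Λ) * (1 + |u|) ^ (4 * n + 1) := by rw [pow_succ]; ring
      have h6 : (1 + |u|) ^ (4 * n + 1) ≤ 2 ^ (4 * n + 1) * (1 + |u| ^ (4 * n + 1)) :=
        one_add_pow_le |u| hau (4 * n + 1)
      calc (1 + u ^ 2) ^ (2 * n) * ((1 + |u|) + Λ)
          ≤ (1 + Λ) * (1 + |u|) ^ (4 * n + 1) := by rw [← h5]; exact h4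
        _ ≤ (1 + Λ) * (2 ^ (4 * n + 1) * (1 + |u| ^ (4 * n + 1))) := by
            apply mul_le_mul_of_nonneg_left h6 (by positivity)
        _ = (1 + Λ) * 2 ^ (4 * n + 1) * (1 + |u| ^ (4 * n + 1)) := by ring
    calc hfun n Λ u
        ≤ ((1 + Λ) * 2 ^ (4 * n + 1) * (1 + |u| ^ (4 * n + 1)))
          * (Real.exp (4 * n * Λ ^ 2) * Real.exp (-(n:ℝ) * u ^ 2)) := by
          unfold hfun
          apply mul_le_mul hpoly hexp (Real.exp_nonneg _) (by positivity)
      _ = C3 * (Real.exp (-(n:ℝ) * u ^ 2) + |u| ^ (4 * n + 1) * Real.exp (-(n:ℝ) * u ^ 2)) := by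
          rw [hC3]; ring
  have hg : Integrable (fun u : ℝ => C3 * (Real.exp (-(n:ℝ) * u ^ 2)
      + |u| ^ (4 * n + 1) * Real.exp (-(n:ℝ) * u ^ 2))) :=
    ((integrable_exp_neg_mul_sq hn').add (integrable_abs_pow_gauss (4 * n + 1) _ hn')).const_mul _
  apply hg.mono' (hfun_cont n Λ).aestronglyMeasurable
  filter_upwards with u
  rw [Real.norm_eq_abs, abs_of_nonneg (hfun_nonneg n Λ hΛ u)]
  exact hbd u

lemma Dv_le (n : ℕ) (y : Fin n → ℝ) :
    Dv n y ≤ 2 ^ (n * n) * ∏ j : Fin n, (1 + (y j) ^ 2) ^ (2 * n) := by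
  have hstep : Dv n y ≤ ∏ i : Fin n, ∏ j : Fin n, (2 * ((1 + (y i) ^ 2) * (1 + (y j) ^ 2))) := by
    apply Finset.prod_le_prod
    · intro i _
      apply Finset.prod_nonneg
      intro j _
      split <;> positivity
    · intro i _
      apply Finset.prod_le_prod
      · intro j _; split <;> positivity
      · intro j _
        by_cases h : i < j
        · rw [if_pos h]
          nlinarith [sq_nonneg (y i + y j), sq_nonneg (y i * y j), sq_nonneg (y i), sq_nonneg (y j)]
        · rw [if_neg h]
          nlinarith [sq_nonneg (y i * y j), sq_nonneg (y i), sq_nonneg (y j)]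
  refine hstep.trans (le_of_eq ?_)
  have hinner : ∀ i : Fin n, (∏ j : Fin n, (2 * ((1 + (y i) ^ 2) * (1 + (y j) ^ 2))))
      = 2 ^ n * ((1 + (y i) ^ 2) ^ n * ∏ j : Fin n, (1 + (y j) ^ 2)) := by
    intro i
    rw [Finset.prod_mul_distrib, Finset.prod_mul_distrib, Finset.prod_const, Finset.prod_const,
      Finset.card_univ, Fintype.card_fin]
  rw [Finset.prod_congr rfl fun i _ => hinner i, Finset.prod_mul_distrib,
    Finset.prod_mul_distrib, Finset.prod_const, Finset.card_univ, Fintype.card_fin,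
    ← pow_mul, Finset.prod_const, Finset.card_univ, Fintype.card_fin, ← Finset.prod_pow]
  have : ∀ j : Fin n, ((1 + (y j) ^ 2) ^ n) * ((1 + (y j) ^ 2) ^ n)
      = (1 + (y j) ^ 2) ^ (2 * n) := by
    intro j
    rw [← pow_add, two_mul]
  rw [← Finset.prod_mul_distrib, Finset.prod_congr rfl fun j _ => this j]

section main

variable (m n : ℕ) (t : ℕ → ℝ)

/-- main differentiation lemma -/
lemma hasDerivAt_Zn (hm : 1 ≤ m) (hn : 1 ≤ n) (ht : 0 < t (2 * m)) (lam₀ : ℝ) :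
    HasDerivAt (fun l => Zn m n l t)
      ((-(4:ℝ) * n) * ∫ x : Fin n → ℝ,
        (∑ k : Fin n, x k) * (Dv n x * ∏ j : Fin n, wfun m n lam₀ t (x j))) lam₀ := by
  classical
  set Λ : ℝ := |lam₀| + 1 with hΛdef
  have hΛ1 : 1 ≤ Λ := by rw [hΛdef]; linarith [abs_nonneg lam₀]
  have hΛ0 : 0 ≤ Λ := by linarith
  set CB : ℝ := Real.exp ((n : ℝ) * polB m t) with hCB
  have hCB0 : 0 < CB := Real.exp_pos _
  set bound : (Fin n → ℝ) → ℝ := fun y =>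
    (2:ℝ) ^ (n * n) * CB ^ n * (4 * n * n) * ∏ j : Fin n, hfun n Λ (y j) with hbound
  have hn' : (0:ℝ) < (n:ℝ) := by exact_mod_cast hn
  -- nonnegativity of pieces
  have hGnn : ∀ y : Fin n → ℝ, 0 ≤ Dv n y * ∏ j : Fin n, wz m n t (y j) := fun y =>
    mul_nonneg (Dv_nonneg n y) (Finset.prod_nonneg fun j _ => wz_nonneg m n t (y j))
  -- the two core pointwise bounds
  have hcore : ∀ (l : ℝ), l ∈ Metric.ball lam₀ 1 → ∀ y : Fin n → ℝ,
      (Dv n y * ∏ j : Fin n, wz m n t (y j)) * Real.exp (Sfn n l y)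
        ≤ (2:ℝ) ^ (n * n) * CB ^ n *
          ∏ j : Fin n, ((1 + (y j) ^ 2) ^ (2 * n)
            * Real.exp ((-(2:ℝ) * n) * (y j) ^ 2 + 4 * n * Λ * |y j|)) := by
    intro l hl y
    have hlΛ : |l| ≤ Λ := by
      have := mem_ball_iff_norm.mp hl
      rw [Real.norm_eq_abs] at this
      have h2 : |l| ≤ |lam₀| + |l - lam₀| := by
        have := abs_sub_abs_le_abs_sub l lam₀
        linarith [abs_sub_abs_le_abs_sub l lam₀]
      rw [hΛdef]; linarith
    have hexp : Real.exp (Sfn n l y)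
        ≤ ∏ j : Fin n, Real.exp ((-(2:ℝ) * n) * (y j) ^ 2 + 4 * n * Λ * |y j|) := by
      rw [Sfn, Real.exp_sum]
      apply Finset.prod_le_prod (fun j _ => (Real.exp_pos _).le)
      intro j _
      apply Real.exp_le_exp.mpr
      have h1 : (y j) ^ 2 - 2 * Λ * |y j| ≤ (y j + l) ^ 2 := by
        have h2 : |(y j) * l| ≤ |y j| * Λ := by
          rw [abs_mul]
          exact mul_le_mul_of_nonneg_left hlΛ (abs_nonneg _)
        have h3 := neg_abs_le ((y j) * l)
        nlinarith [sq_nonneg l]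
      nlinarith [hn'.le, abs_nonneg (y j)]
    have hwz : (∏ j : Fin n, wz m n t (y j)) ≤ CB ^ n := by
      calc (∏ j : Fin n, wz m n t (y j)) ≤ ∏ _j : Fin n, CB :=
            Finset.prod_le_prod (fun j _ => wz_nonneg m n t (y j))
              (fun j _ => wz_le m n hm t ht (y j))
        _ = CB ^ n := by rw [Finset.prod_const, Finset.card_univ, Fintype.card_fin]
    have hDv := Dv_le n y
    calc (Dv n y * ∏ j : Fin n, wz m n t (y j)) * Real.exp (Sfn n l y)
        ≤ ((2 ^ (n * n) * ∏ j : Fin n, (1 + (y j) ^ 2) ^ (2 * n)) * CB ^ n)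
          * ∏ j : Fin n, Real.exp ((-(2:ℝ) * n) * (y j) ^ 2 + 4 * n * Λ * |y j|) := by
          apply mul_le_mul
          · exact mul_le_mul hDv hwz (Finset.prod_nonneg fun j _ => wz_nonneg m n t (y j))
              (by positivity)
          · exact hexp
          · exact (Real.exp_pos _).le
          · have h7 : (0:ℝ) ≤ ∏ j : Fin n, (1 + (y j) ^ 2) ^ (2 * n) :=
              Finset.prod_nonneg fun j _ => by positivity
            exact mul_nonneg (mul_nonneg (by positivity) h7) (by positivity)
      _ = (2:ℝ) ^ (n * n) * CB ^ n *
          ∏ j : Fin n, ((1 + (y j) ^ 2) ^ (2 * n)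
            * Real.exp ((-(2:ℝ) * n) * (y j) ^ 2 + 4 * n * Λ * |y j|)) := by
          rw [Finset.prod_mul_distrib]
          ring
  -- bound for the sum factor
  have hsum : ∀ (l : ℝ), l ∈ Metric.ball lam₀ 1 → ∀ y : Fin n → ℝ,
      |∑ j : Fin n, (-(2:ℝ) * n) * (2 * (y j + l))|
        ≤ (4 * n * n) * ∏ j : Fin n, ((1 + |y j|) + Λ) := by
    intro l hl y
    have hlΛ : |l| ≤ Λ := by
      have := mem_ball_iff_norm.mp hl
      rw [Real.norm_eq_abs] at this
      rw [hΛdef]; linarith [abs_sub_abs_le_abs_sub l lam₀]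
    have h1 : ∀ j : Fin n, |(-(2:ℝ) * n) * (2 * (y j + l))| ≤ (4 * n) * ((1 + |y j|) + Λ) := by
      intro j
      rw [abs_mul]
      have h2 : |(-(2:ℝ) * (n:ℝ))| = 2 * n := by
        rw [abs_of_nonpos (by nlinarith [hn'.le] : -(2:ℝ) * (n:ℝ) ≤ 0)]
        ring
      have h3 : |2 * (y j + l)| = 2 * |y j + l| := by
        rw [abs_mul]
        norm_num
      rw [h2, h3]
      have h4 : |y j + l| ≤ (1 + |y j|) + Λ := by
        have := abs_add_le (y j) l
        have := abs_nonneg (y j)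
        linarith
      nlinarith [abs_nonneg (y j + l), hn'.le]
    have hfac1 : ∀ i : Fin n, (1:ℝ) ≤ (1 + |y i|) + Λ := by
      intro i
      have := abs_nonneg (y i)
      linarith
    have h5 : ∀ j : Fin n, ((1 + |y j|) + Λ) ≤ ∏ i : Fin n, ((1 + |y i|) + Λ) := by
      intro j
      rw [← Finset.mul_prod_erase Finset.univ (fun i : Fin n => (1 + |y i|) + Λ)
        (Finset.mem_univ j)]
      have hone : (1:ℝ) ≤ ∏ i ∈ Finset.univ.erase j, ((1 + |y i|) + Λ) := by
        have := Finset.prod_le_prod (s := Finset.univ.erase j)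
          (f := fun _ : Fin n => (1:ℝ)) (g := fun i : Fin n => (1 + |y i|) + Λ)
          (fun i _ => zero_le_one) (fun i _ => hfac1 i)
        simpa using this
      nlinarith [hfac1 j]
    calc |∑ j : Fin n, (-(2:ℝ) * n) * (2 * (y j + l))|
        ≤ ∑ j : Fin n, |(-(2:ℝ) * n) * (2 * (y j + l))| := Finset.abs_sum_le_sum_abs _ _
      _ ≤ ∑ _j : Fin n, (4 * (n:ℝ)) * ∏ i : Fin n, ((1 + |y i|) + Λ) := by
          refine Finset.sum_le_sum fun j _ => ?_
          exact (h1 j).trans (mul_le_mul_of_nonneg_left (h5 j) (by positivity))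
      _ = (4 * n * n) * ∏ i : Fin n, ((1 + |y i|) + Λ) := by
          rw [Finset.sum_const, Finset.card_univ, Fintype.card_fin, nsmul_eq_mul]
          ring
  -- full bound for F'
  have hbnd : ∀ (l : ℝ), l ∈ Metric.ball lam₀ 1 → ∀ y : Fin n → ℝ,
      ‖Ffn' m n t l y‖ ≤ bound y := by
    intro l hl y
    have hFnn : 0 ≤ (Dv n y * ∏ j : Fin n, wz m n t (y j)) * Real.exp (Sfn n l y) :=
      mul_nonneg (hGnn y) (Real.exp_nonneg _)
    rw [Ffn', Real.norm_eq_abs, abs_mul, abs_of_nonneg hFnn]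
    calc ((Dv n y * ∏ j : Fin n, wz m n t (y j)) * Real.exp (Sfn n l y))
          * |∑ j : Fin n, (-(2:ℝ) * n) * (2 * (y j + l))|
        ≤ ((2:ℝ) ^ (n * n) * CB ^ n *
            ∏ j : Fin n, ((1 + (y j) ^ 2) ^ (2 * n)
              * Real.exp ((-(2:ℝ) * n) * (y j) ^ 2 + 4 * n * Λ * |y j|)))
          * ((4 * n * n) * ∏ j : Fin n, ((1 + |y j|) + Λ)) := by
          apply mul_le_mul (hcore l hl y) (hsum l hl y) (abs_nonneg _)
          have h6 : (0:ℝ) ≤ ∏ j : Fin n, ((1 + (y j) ^ 2) ^ (2 * n)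
              * Real.exp ((-(2:ℝ) * n) * (y j) ^ 2 + 4 * n * Λ * |y j|)) := by
            apply Finset.prod_nonneg
            intro j _
            positivity
          positivity
      _ = bound y := by
          have hby : bound y
              = (2:ℝ) ^ (n * n) * CB ^ n * (4 * (n:ℝ) * n) * ∏ j : Fin n, hfun n Λ (y j) := rfl
          rw [hby]
          have hsplit : ∏ j : Fin n, hfun n Λ (y j)
              = (∏ j : Fin n, ((1 + (y j) ^ 2) ^ (2 * n)
                  * Real.exp ((-(2:ℝ) * n) * (y j) ^ 2 + 4 * n * Λ * |y j|)))
                * ∏ j : Fin n, ((1 + |y j|) + Λ) := by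
            rw [← Finset.prod_mul_distrib]
            refine Finset.prod_congr rfl fun j _ => ?_
            rw [hfun]
            ring
          rw [hsplit]
          ring
  -- bound for F itself
  have hbndF : ∀ (l : ℝ), l ∈ Metric.ball lam₀ 1 → ∀ y : Fin n → ℝ,
      ‖Ffn m n t l y‖ ≤ bound y := by
    intro l hl y
    have hFnn : 0 ≤ (Dv n y * ∏ j : Fin n, wz m n t (y j)) * Real.exp (Sfn n l y) :=
      mul_nonneg (hGnn y) (Real.exp_nonneg _)
    rw [Ffn, Real.norm_eq_abs, abs_of_nonneg hFnn]
    have h1 := hcore l hl y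
    have h2 : (2:ℝ) ^ (n * n) * CB ^ n *
        ∏ j : Fin n, ((1 + (y j) ^ 2) ^ (2 * n)
          * Real.exp ((-(2:ℝ) * n) * (y j) ^ 2 + 4 * n * Λ * |y j|)) ≤ bound y := by
      have hby : bound y
          = (2:ℝ) ^ (n * n) * CB ^ n * (4 * (n:ℝ) * n) * ∏ j : Fin n, hfun n Λ (y j) := rfl
      rw [hby]
      have hsplit : ∏ j : Fin n, hfun n Λ (y j)
          = (∏ j : Fin n, ((1 + (y j) ^ 2) ^ (2 * n)
              * Real.exp ((-(2:ℝ) * n) * (y j) ^ 2 + 4 * n * Λ * |y j|)))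
            * ∏ j : Fin n, ((1 + |y j|) + Λ) := by
        rw [← Finset.prod_mul_distrib]
        refine Finset.prod_congr rfl fun j _ => ?_
        rw [hfun]
        ring
      rw [hsplit]
      set Pp := ∏ j : Fin n, ((1 + (y j) ^ 2) ^ (2 * n)
          * Real.exp ((-(2:ℝ) * n) * (y j) ^ 2 + 4 * n * Λ * |y j|)) with hPp
      set Qq := ∏ j : Fin n, ((1 + |y j|) + Λ) with hQq
      have hP : (0:ℝ) ≤ Pp := by
        rw [hPp]
        apply Finset.prod_nonneg
        intro j _
        positivity
      have hQ : (1:ℝ) ≤ Qq := by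
        rw [hQq]
        have := Finset.prod_le_prod (s := (Finset.univ : Finset (Fin n)))
          (f := fun _ : Fin n => (1:ℝ)) (g := fun j : Fin n => (1 + |y j|) + Λ)
          (fun i _ => zero_le_one)
          (fun i _ => by show (1:ℝ) ≤ (1 + |y i|) + Λ; have := abs_nonneg (y i); linarith)
        simpa using this
      have h4nn : (1:ℝ) ≤ 4 * (n:ℝ) * n := by
        have : (1:ℝ) ≤ (n:ℝ) := by exact_mod_cast hn
        nlinarith
      have hK0 : (0:ℝ) ≤ (2:ℝ) ^ (n * n) * CB ^ n :=
        mul_nonneg (by positivity) (pow_nonneg hCB0.le n)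
      have hQ0 : (0:ℝ) ≤ Qq := le_trans zero_le_one hQ
      calc (2:ℝ) ^ (n * n) * CB ^ n * Pp
          ≤ ((2:ℝ) ^ (n * n) * CB ^ n * Pp) * Qq :=
            le_mul_of_one_le_right (mul_nonneg hK0 hP) hQ
        _ ≤ (4 * (n:ℝ) * n) * (((2:ℝ) ^ (n * n) * CB ^ n * Pp) * Qq) :=
            le_mul_of_one_le_left (mul_nonneg (mul_nonneg hK0 hP) hQ0) h4nn
        _ = (2:ℝ) ^ (n * n) * CB ^ n * (4 * (n:ℝ) * n) * (Pp * Qq) := by ring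
    exact h1.trans h2
  -- measurability
  have hGmeas : Measurable (fun y : Fin n → ℝ => Dv n y * ∏ j : Fin n, wz m n t (y j)) :=
    (Dv_cont n).measurable.mul
      (Finset.measurable_prod _ fun j _ => (wz_meas m n t).comp (measurable_pi_apply j))
  have hSmeas : ∀ l : ℝ, Measurable (fun y : Fin n → ℝ => Real.exp (Sfn n l y)) := by
    intro l
    apply Measurable.exp
    apply Finset.measurable_sum
    intro j _
    have hj : Measurable fun y : Fin n → ℝ => y j := measurable_pi_apply j
    exact ((hj.add_const l).pow_const 2).const_mul _
  have hFmeas : ∀ l : ℝ, AEStronglyMeasurable (Ffn m n t l) (volume : Measure (Fin n → ℝ)) := by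
    intro l
    exact (hGmeas.mul (hSmeas l)).aestronglyMeasurable
  have hF'meas : AEStronglyMeasurable (Ffn' m n t lam₀) (volume : Measure (Fin n → ℝ)) := by
    apply Measurable.aestronglyMeasurable
    apply (hGmeas.mul (hSmeas lam₀)).mul
    apply Finset.measurable_sum
    intro j _
    have hj : Measurable fun y : Fin n → ℝ => y j := measurable_pi_apply j
    exact ((hj.add_const lam₀).const_mul 2).const_mul _
  -- integrability of the bound
  have hbound_int : Integrable bound := by
    rw [hbound]
    exact (Integrable.fintype_prod (f := fun (_ : Fin n) => hfun n Λ)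
      (fun i => hfun_int n hn Λ hΛ0)).const_mul _
  -- F lam₀ integrable
  have hFint : Integrable (Ffn m n t lam₀) := by
    apply hbound_int.mono' (hFmeas lam₀)
    filter_upwards with y
    exact hbndF lam₀ (Metric.mem_ball_self one_pos) y
  -- apply dominated differentiation
  have hmain := hasDerivAt_integral_of_dominated_loc_of_deriv_le
    (F := fun l (y : Fin n → ℝ) => Ffn m n t l y)
    (F' := fun l (y : Fin n → ℝ) => Ffn' m n t l y)
    (bound := bound) (Metric.ball_mem_nhds _ one_pos)
    (Eventually.of_forall fun l => hFmeas l) hFint hF'meas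
    (Eventually.of_forall fun y => fun l hl => hbnd l hl y) hbound_int
    (Eventually.of_forall fun y => fun l _ => Ffn_hasDeriv m n t l y)
  obtain ⟨-, hder⟩ := hmain
  -- identify the function
  have hfunid : (fun l => ∫ y : Fin n → ℝ, Ffn m n t l y) = fun l => Zn m n l t :=
    funext fun l => (Zn_shift m n t l).symm
  rw [hfunid] at hder
  -- identify the derivative value
  have hval : (∫ y : Fin n → ℝ, Ffn' m n t lam₀ y)
      = (-(4:ℝ) * n) * ∫ x : Fin n → ℝ,
          (∑ k : Fin n, x k) * (Dv n x * ∏ j : Fin n, wfun m n lam₀ t (x j)) := by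
    set c : Fin n → ℝ := fun _ => lam₀ with hc
    set H : (Fin n → ℝ) → ℝ := fun x => (Dv n x * ∏ j : Fin n, wfun m n lam₀ t (x j))
      * ∑ k : Fin n, (-(2:ℝ) * n) * (2 * x k) with hH
    have hHshift : ∀ y : Fin n → ℝ, H (y + c) = Ffn' m n t lam₀ y := by
      intro y
      rw [hH]
      simp only [Pi.add_apply]
      have h1 : Dv n (y + c) = Dv n y := Dv_shift n y lam₀
      have h2 : (∏ j : Fin n, wfun m n lam₀ t ((y + c) j))
          = (∏ j : Fin n, wz m n t (y j)) * Real.exp (Sfn n lam₀ y) := by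
        have h3 : (∏ j : Fin n, wfun m n lam₀ t ((y + c) j))
            = ∏ j : Fin n, wfun m n lam₀ t (y j + lam₀) := by
          refine Finset.prod_congr rfl fun j _ => ?_
          simp [hc]
        rw [h3, wprod_shift m n t lam₀ y]
      show Dv n (y + c) * (∏ j : Fin n, wfun m n lam₀ t ((y + c) j))
          * (∑ k : Fin n, (-(2:ℝ) * n) * (2 * ((y + c) k))) = Ffn' m n t lam₀ y
      rw [h1, h2, Ffn']
      have h4 : (∑ k : Fin n, (-(2:ℝ) * n) * (2 * ((y + c) k)))
          = ∑ k : Fin n, (-(2:ℝ) * n) * (2 * (y k + lam₀)) := by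
        refine Finset.sum_congr rfl fun k _ => ?_
        simp [hc]
      rw [h4]
      ring
    have htr : (∫ y : Fin n → ℝ, H (y + c)) = ∫ x : Fin n → ℝ, H x :=
      MeasureTheory.integral_add_right_eq_self H c
    rw [← funext hHshift, htr]
    have hHeq : H = fun x => (-(4:ℝ) * n) * ((∑ k : Fin n, x k)
        * (Dv n x * ∏ j : Fin n, wfun m n lam₀ t (x j))) := by
      funext x
      show (Dv n x * ∏ j : Fin n, wfun m n lam₀ t (x j))
          * (∑ k : Fin n, (-(2:ℝ) * n) * (2 * x k))
        = (-(4:ℝ) * n) * ((∑ k : Fin n, x k) * (Dv n x * ∏ j : Fin n, wfun m n lam₀ t (x j)))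
      have : (∑ k : Fin n, (-(2:ℝ) * n) * (2 * x k)) = (-(4:ℝ) * n) * ∑ k : Fin n, x k := by
        rw [Finset.mul_sum]
        refine Finset.sum_congr rfl fun k _ => ?_
        ring
      rw [this]
      ring
    rw [hHeq, integral_const_mul]
  rw [hval] at hder
  exact hder

end main

/-- `λ ↦ ln Z_n(λ;t)` is differentiable on `ℝ` with
`d/dλ ln Z_n(λ;t) = 4n 𝔭_1(n;λ,t)`, where `𝔭_1(n;λ,t)` is the coefficient of `x^{n−1}`
in the monic orthogonal polynomial `π_n(·;λ,t)`. -/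
theorem stmt5 (m n : ℕ) (hm : 1 ≤ m) (hn : 1 ≤ n) (t : ℕ → ℝ) (ht : 0 < t (2 * m))
    (P : ℝ → ℕ → Polynomial ℝ) (γ : ℝ → ℕ → ℝ) (hOP : orthoFam m n t P γ) :
    ∀ lam : ℝ, HasDerivAt (fun l => Real.log (Zn m n l t))
      (4 * (n : ℝ) * (P lam n).coeff (n - 1)) lam := by
  intro lam
  have hZval : Zn m n lam t
      = (n.factorial : ℝ) * ∏ i : Fin n, (γ lam (i : ℕ)) ^ (-(2:ℤ)) := I0_val hOP lam
  have hZpos : 0 < Zn m n lam t := by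
    rw [hZval]
    have h1 : (0:ℝ) < (n.factorial : ℝ) := by exact_mod_cast n.factorial_pos
    have h2 : 0 < ∏ i : Fin n, (γ lam (i : ℕ)) ^ (-(2:ℤ)) :=
      Finset.prod_pos fun i _ => zpow_pos (hOP.2.2.1 lam (i : ℕ)) _
    exact mul_pos h1 h2
  have hder := hasDerivAt_Zn m n t hm hn ht lam
  have h1 : (∫ x : Fin n → ℝ, (∑ k : Fin n, x k)
      * (Dv n x * ∏ j : Fin n, wfun m n lam t (x j)))
      = (∑ j ∈ Finset.range n, ccoef P lam j)
        * ((n.factorial : ℝ) * ∏ i : Fin n, (γ lam (i : ℕ)) ^ (-(2:ℤ))) := I1_val hOP lam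
  have hval : ((-(4:ℝ) * n) * ∫ x : Fin n → ℝ, (∑ k : Fin n, x k)
      * (Dv n x * ∏ j : Fin n, wfun m n lam t (x j)))
      = 4 * (n : ℝ) * (P lam n).coeff (n - 1) * Zn m n lam t := by
    rw [h1, ccoef_sum hOP lam n hn, hZval]
    ring
  rw [hval] at hder
  have hlog := hder.log (ne_of_gt hZpos)
  convert hlog using 1
  field_simp


end
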